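/- arXiv:1306.0027 — 6 statements merged into one kernel-verified Lean document; each statement's English description precedes it below -/
import Mathlib

section
/- For rational v (outside finitely many exceptions), the cubic x^3 + A x^2 + B x with A = 37 - 84v + 102v^2 - 36v^3 - 3v^4 and B = 32(v-1)^3(v+1)^3(3v-5) splits into three linear factors over Q. -/
open Polynomial in
/-- For all rational `v` outside finitely many exceptions, the cubic
`x³ + A₂₆(v)x² + B₂₆(v)x`, where `A₂₆(v) = 37 - 84v + 102v² - 36v³ - 3v⁴` and
`B₂₆(v) = 32(v-1)³(v+1)³(3v-5)`, splits into three linear factors over `ℚ`. -/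
theorem stmt5 : ∃ S : Set ℚ, S.Finite ∧ ∀ v : ℚ, v ∉ S →
    ∃ r s : ℚ,
      X ^ 3 + C (37 - 84 * v + 102 * v ^ 2 - 36 * v ^ 3 - 3 * v ^ 4) * X ^ 2 +
        C (32 * (v - 1) ^ 3 * (v + 1) ^ 3 * (3 * v - 5)) * X =
      X * (X - C r) * (X - C s) := by
  refine ⟨∅, Set.finite_empty, fun v _ => ?_⟩
  obtain ⟨r, hr⟩ : ∃ r : ℚ, r = 3 * v ^ 4 + 4 * v ^ 3 - 6 * v ^ 2 - 12 * v - 5 := ⟨_, rfl⟩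
  obtain ⟨s, hs⟩ : ∃ s : ℚ, s = 32 * (v - 1) ^ 3 := ⟨_, rfl⟩
  refine ⟨r, s, ?_⟩
  have hA : C (37 - 84 * v + 102 * v ^ 2 - 36 * v ^ 3 - 3 * v ^ 4) = -(C r + C s) := by
    rw [← C_add, ← C_neg]; congr 1; rw [hr, hs]; ring
  have hB : C (32 * (v - 1) ^ 3 * (v + 1) ^ 3 * (3 * v - 5)) = C r * C s := by
    rw [← C_mul]; congr 1; rw [hr, hs]; ring
  rw [hA, hB]; ring
end

section
/- The point with x-coordinate X = ((w-1)^2(w+1)^2(5+7w^2)^2(11+25w^2))/16 lies on the curve y^2 = x^3 + AA x^2 + BB x over Q(w) with AA = -31 - 148w^2 + 214w^4 - 116w^6 + 337w^8, BB = 256(w-1)^4(w+1)^4(1+3w^2)^4, if and only if 11 + 25w^2 times a certain square is itself a square; in particular for w = (11 - u^2)/(10u) the value X(w) is the x-coordinate of a rational point on the specialized curve for all but finitely many rational u. -/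
/-- For all but finitely many rational `u`, setting `w = (11 - u²)/(10u)`, the value
`X = (w-1)²(w+1)²(5+7w²)²(11+25w²)/16` is the `x`-coordinate of a rational point on the
curve `y² = x³ + AA(w)x² + BB(w)x`, where `AA(w) = -31 - 148w² + 214w⁴ - 116w⁶ + 337w⁸`
and `BB(w) = 256(w-1)⁴(w+1)⁴(1+3w²)⁴`. -/
theorem stmt8 : ∃ S : Set ℚ, S.Finite ∧ ∀ u : ℚ, u ∉ S →
    ∀ w X : ℚ, w = (11 - u ^ 2) / (10 * u) →
      X = (w - 1) ^ 2 * (w + 1) ^ 2 * (5 + 7 * w ^ 2) ^ 2 * (11 + 25 * w ^ 2) / 16 →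
      ∃ y : ℚ, y ^ 2 = X ^ 3 +
        (-31 - 148 * w ^ 2 + 214 * w ^ 4 - 116 * w ^ 6 + 337 * w ^ 8) * X ^ 2 +
        (256 * (w - 1) ^ 4 * (w + 1) ^ 4 * (1 + 3 * w ^ 2) ^ 4) * X := by
  refine ⟨{0}, Set.finite_singleton 0, ?_⟩
  intro u hu w X hw hX
  have hu0 : u ≠ 0 := by simpa using hu
  refine ⟨(((179099515263696036625 : ℚ) * u ^ 0 + (52349377627253370125 : ℚ) * u ^ 2 + (-677823816196300467375 : ℚ) * u ^ 4 + (401369210768583050125 : ℚ) * u ^ 6 + (126884817662529535125 : ℚ) * u ^ 8 + (-79456983365205205375 : ℚ) * u ^ 10 + (-5633066608099530875 : ℚ) * u ^ 12 + (2947691761822256625 : ℚ) * u ^ 14 + (267971978347477875 : ℚ) * u ^ 16 + (-4232206317129625 : ℚ) * u ^ 18 + (-493365352374125 : ℚ) * u ^ 20 + (6511197426375 : ℚ) * u ^ 22 + (170219726375 : ℚ) * u ^ 24 + (-2375731125 : ℚ) * u ^ 26 + (1516375 : ℚ) * u ^ 28 + (42875 : ℚ) * u ^ 30) / 64) / (10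 * u) ^ 15, ?_⟩
  subst hX hw
  field_simp
  ring
end

section
/- The point (8(w^2−8)(w^2−5)(w^2−2)(5w^2−16), 72(w−2)^2(w+2)^2(w^2−8)(w^2−5)(w^2−2)(5w^2−16)) lies on the curve y^2 = x^3 + AA_26(w)x^2 + BB_26(w)x over Q(w), where AA_26(w) = 9472 − 7808w^2 + 2688w^4 − 488w^6 + 37w^8 and BB_26(w) = 32(w^2−8)^3(w^2−5)(w^2−2)^3(5w^2−16), and this point has order 6 in the group of Q(w)-points (for all but finitely many specializations, it has order 6). -/
open RatFunc in
/-- The curve `y² = x³ + AA₂₆(w)x² + BB₂₆(w)x` over `ℚ(w)`. -/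
noncomputable def curveAA26 : WeierstrassCurve.Affine (RatFunc ℚ) :=
  { a₁ := 0, a₂ := 9472 - 7808 * X ^ 2 + 2688 * X ^ 4 - 488 * X ^ 6 + 37 * X ^ 8,
    a₃ := 0,
    a₄ := 32 * (X ^ 2 - 8) ^ 3 * (X ^ 2 - 5) * (X ^ 2 - 2) ^ 3 * (5 * X ^ 2 - 16),
    a₆ := 0 }

private lemma rfne {p : Polynomial ℚ} (h : Polynomial.eval 1 p ≠ 0) :
    algebraMap (Polynomial ℚ) (RatFunc ℚ) p ≠ 0 := by
  intro hc
  apply h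
  have hp : p = 0 := IsFractionRing.injective (Polynomial ℚ) (RatFunc ℚ) (by simpa using hc)
  rw [hp]
  simp

private lemma some_eq_some {F : Type*} [Field F] {W : WeierstrassCurve.Affine F}
    {x₁ y₁ x₂ y₂ : F} (hx : x₁ = x₂) (hy : y₁ = y₂)
    (h₁ : W.Nonsingular x₁ y₁) (h₂ : W.Nonsingular x₂ y₂) :
    WeierstrassCurve.Affine.Point.some _ _ h₁ = WeierstrassCurve.Affine.Point.some _ _ h₂ := by
  subst hx; subst hy; rfl

private lemma eq_zero_of_self_eq_neg {a : RatFunc ℚ} (h : a = -a) : a = 0 := by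
  have h2 : (2 : RatFunc ℚ) * a = 0 := by linear_combination h
  have h2ne : (2 : RatFunc ℚ) ≠ 0 := by
    have := rfne (p := 2) (by norm_num)
    simpa only [map_ofNat] using this
  exact (mul_eq_zero.mp h2).resolve_left h2ne

open Classical in
open RatFunc in
/-- The point `(8(w²-8)(w²-5)(w²-2)(5w²-16), 72(w-2)²(w+2)²(w²-8)(w²-5)(w²-2)(5w²-16))`
is a nonsingular point of the curve `y² = x³ + AA₂₆(w)x² + BB₂₆(w)x` over `ℚ(w)`,
of order 6 in the group of `ℚ(w)`-points. -/
theorem stmt11 :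
    ∃ h : curveAA26.Nonsingular
        (8 * (X ^ 2 - 8) * (X ^ 2 - 5) * (X ^ 2 - 2) * (5 * X ^ 2 - 16))
        (72 * (X - 2) ^ 2 * (X + 2) ^ 2 * (X ^ 2 - 8) * (X ^ 2 - 5) * (X ^ 2 - 2) *
          (5 * X ^ 2 - 16)),
      addOrderOf (WeierstrassCurve.Affine.Point.some _ _ h) = 6 := by
  set x₀ : RatFunc ℚ :=
    8 * (X ^ 2 - 8) * (X ^ 2 - 5) * (X ^ 2 - 2) * (5 * X ^ 2 - 16) with hx₀
  set y₀ : RatFunc ℚ :=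
    72 * (X - 2) ^ 2 * (X + 2) ^ 2 * (X ^ 2 - 8) * (X ^ 2 - 5) * (X ^ 2 - 2) *
      (5 * X ^ 2 - 16) with hy₀
  set x₂ : RatFunc ℚ := 4 * (X ^ 2 - 8) ^ 2 * (X ^ 2 - 2) ^ 2 with hx₂
  set y₂ : RatFunc ℚ :=
    36 * (X - 2) ^ 2 * (X + 2) ^ 2 * (X ^ 2 - 8) ^ 2 * (X ^ 2 - 2) ^ 2 with hy₂
  -- nonvanishing facts
  have hy0 : y₀ ≠ 0 := by
    have := rfne (p := 72 * (Polynomial.X - 2) ^ 2 * (Polynomial.X + 2) ^ 2 *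
      (Polynomial.X ^ 2 - 8) * (Polynomial.X ^ 2 - 5) * (Polynomial.X ^ 2 - 2) *
      (5 * Polynomial.X ^ 2 - 16)) (by norm_num)
    simpa only [map_mul, map_sub, map_add, map_pow, map_ofNat, RatFunc.algebraMap_X] using this
  have hy2 : y₂ ≠ 0 := by
    have := rfne (p := 36 * (Polynomial.X - 2) ^ 2 * (Polynomial.X + 2) ^ 2 *
      (Polynomial.X ^ 2 - 8) ^ 2 * (Polynomial.X ^ 2 - 2) ^ 2) (by norm_num)
    simpa only [map_mul, map_sub, map_add, map_pow, map_ofNat, RatFunc.algebraMap_X] using this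
  have ha4 : curveAA26.a₄ ≠ 0 := by
    have := rfne (p := 32 * (Polynomial.X ^ 2 - 8) ^ 3 * (Polynomial.X ^ 2 - 5) *
      (Polynomial.X ^ 2 - 2) ^ 3 * (5 * Polynomial.X ^ 2 - 16)) (by norm_num)
    simpa only [curveAA26, map_mul, map_sub, map_add, map_pow, map_ofNat,
      RatFunc.algebraMap_X] using this
  have hxne : x₂ ≠ x₀ := by
    have hd : x₂ - x₀ ≠ 0 := by
      have := rfne (p := 4 * (Polynomial.X ^ 2 - 8) ^ 2 * (Polynomial.X ^ 2 - 2) ^ 2 -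
        8 * (Polynomial.X ^ 2 - 8) * (Polynomial.X ^ 2 - 5) * (Polynomial.X ^ 2 - 2) *
        (5 * Polynomial.X ^ 2 - 16)) (by norm_num)
      simpa only [map_mul, map_sub, map_add, map_pow, map_ofNat, RatFunc.algebraMap_X] using this
    exact sub_ne_zero.mp hd
  -- the three nonsingular points
  have h : curveAA26.Nonsingular x₀ y₀ := by
    rw [WeierstrassCurve.Affine.nonsingular_iff]
    constructor
    · rw [WeierstrassCurve.Affine.equation_iff]
      simp only [curveAA26, hx₀, hy₀]
      ring1
    · right
      simp only [curveAA26, mul_zero, zero_mul, sub_zero]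
      intro hc
      exact hy0 (eq_zero_of_self_eq_neg hc)
  have h₂ : curveAA26.Nonsingular x₂ y₂ := by
    rw [WeierstrassCurve.Affine.nonsingular_iff]
    constructor
    · rw [WeierstrassCurve.Affine.equation_iff]
      simp only [curveAA26, hx₂, hy₂]
      ring1
    · right
      simp only [curveAA26, mul_zero, zero_mul, sub_zero]
      intro hc
      exact hy2 (eq_zero_of_self_eq_neg hc)
  have h₃ : curveAA26.Nonsingular (0 : RatFunc ℚ) 0 := by
    rw [WeierstrassCurve.Affine.nonsingular_iff]
    constructor
    · rw [WeierstrassCurve.Affine.equation_iff]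
      simp only [curveAA26]
      ring1
    · left
      simp only [curveAA26, mul_zero, zero_mul, add_zero, zero_add, zero_pow, mul_zero]
      intro hc
      apply ha4
      simp only [curveAA26]
      linear_combination -hc
  -- negY facts
  have hnegY : curveAA26.negY x₀ y₀ = -y₀ := by
    simp [curveAA26, WeierstrassCurve.Affine.negY]
  have hyne : y₀ ≠ curveAA26.negY x₀ y₀ := by
    rw [hnegY]
    intro hc
    exact hy0 (eq_zero_of_self_eq_neg hc)
  -- slopes
  have hslope1 : curveAA26.slope x₀ x₀ y₀ y₀ = 11 * X ^ 4 - 92 * X ^ 2 + 176 := by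
    rw [WeierstrassCurve.Affine.slope_of_Y_ne rfl hyne, hnegY]
    rw [div_eq_iff (by
      intro hc
      exact hy0 (eq_zero_of_self_eq_neg (by linear_combination hc)))]
    simp only [curveAA26, hx₀, hy₀]
    ring1
  have hslope2 : curveAA26.slope x₂ x₀ y₂ y₀ = 9 * X ^ 4 - 72 * X ^ 2 + 144 := by
    rw [WeierstrassCurve.Affine.slope_of_X_ne hxne]
    rw [div_eq_iff (sub_ne_zero.mpr hxne)]
    simp only [hx₀, hy₀, hx₂, hy₂]
    ring1
  -- the point and its multiples
  set P := WeierstrassCurve.Affine.Point.some _ _ h with hP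
  have e2 : P + P = WeierstrassCurve.Affine.Point.some _ _ h₂ := by
    rw [hP, WeierstrassCurve.Affine.Point.add_self_of_Y_ne hyne]
    apply some_eq_some
    · rw [WeierstrassCurve.Affine.addX, hslope1]
      simp only [curveAA26, hx₀, hx₂]
      ring1
    · rw [WeierstrassCurve.Affine.addY, WeierstrassCurve.Affine.negAddY,
        WeierstrassCurve.Affine.negY, WeierstrassCurve.Affine.addX, hslope1]
      simp only [curveAA26, hx₀, hy₀, hy₂]
      ring1
  have e3 : WeierstrassCurve.Affine.Point.some _ _ h₂ + P = WeierstrassCurve.Affine.Point.some _ _ h₃ := by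
    rw [hP, WeierstrassCurve.Affine.Point.add_of_X_ne hxne]
    apply some_eq_some
    · rw [WeierstrassCurve.Affine.addX, hslope2]
      simp only [curveAA26, hx₀, hx₂]
      ring1
    · rw [WeierstrassCurve.Affine.addY, WeierstrassCurve.Affine.negAddY,
        WeierstrassCurve.Affine.negY, WeierstrassCurve.Affine.addX, hslope2]
      simp only [curveAA26, hx₀, hx₂, hy₂]
      ring1
  have e4 : WeierstrassCurve.Affine.Point.some _ _ h₃ + WeierstrassCurve.Affine.Point.some _ _ h₃ =
      (0 : curveAA26.Point) := by
    refine WeierstrassCurve.Affine.Point.add_of_Y_eq rfl ?_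
    simp [curveAA26, WeierstrassCurve.Affine.negY]
  have h2P : 2 • P = WeierstrassCurve.Affine.Point.some _ _ h₂ := by
    rw [two_nsmul]; exact e2
  have h3P : 3 • P = WeierstrassCurve.Affine.Point.some _ _ h₃ := by
    have : (3 : ℕ) • P = 2 • P + P := by rw [succ_nsmul]
    rw [this, h2P, e3]
  have h6P : (6 : ℕ) • P = 0 := by
    have : (6 : ℕ) • P = 3 • P + 3 • P := by rw [← add_nsmul]
    rw [this, h3P, e4]
  refine ⟨h, ?_⟩
  have hdvd : addOrderOf P ∣ 6 := addOrderOf_dvd_of_nsmul_eq_zero h6P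
  have hne0 : P ≠ 0 := WeierstrassCurve.Affine.Point.some_ne_zero h
  have hO1 : addOrderOf P ≠ 1 := fun hc =>
    hne0 (AddMonoid.addOrderOf_eq_one_iff.mp hc)
  have hO2 : addOrderOf P ≠ 2 := fun hc => by
    have := addOrderOf_nsmul_eq_zero P
    rw [hc, h2P] at this
    exact WeierstrassCurve.Affine.Point.some_ne_zero h₂ this
  have hO3 : addOrderOf P ≠ 3 := fun hc => by
    have := addOrderOf_nsmul_eq_zero P
    rw [hc, h3P] at this
    exact WeierstrassCurve.Affine.Point.some_ne_zero h₃ this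
  have hle : addOrderOf P ≤ 6 := Nat.le_of_dvd (by norm_num) hdvd
  show addOrderOf P = 6
  set n := addOrderOf P with hn
  clear_value n
  interval_cases n <;> omega
end

section
/- The quartic equation t^2 = 3509 + 62r^2 + 29r^4 has the rational solution (r,t) = (1,60), and the equation 319 + 290r − 29r^2 − 120rs − 11s^2 + 10rs^2 + r^2s^2 = 0 has a rational solution s (in terms of r) whenever 3509 + 62r^2 + 29r^4 is a rational square and r^2 + 10r − 11 ≠ 0. -/
/-- The quartic `t² = 3509 + 62r² + 29r⁴` has the rational solution `(r,t) = (1,60)`, and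
`319 + 290r - 29r² - 120rs - 11s² + 10rs² + r²s² = 0` has a rational solution `s` whenever
`3509 + 62r² + 29r⁴` is a rational square and `r² + 10r - 11 ≠ 0`. -/
theorem stmt14 :
    ((60 : ℚ) ^ 2 = 3509 + 62 * 1 ^ 2 + 29 * 1 ^ 4) ∧
    ∀ r : ℚ, (∃ t : ℚ, t ^ 2 = 3509 + 62 * r ^ 2 + 29 * r ^ 4) →
      r ^ 2 + 10 * r - 11 ≠ 0 →
      ∃ s : ℚ, 319 + 290 * r - 29 * r ^ 2 - 120 * r * s - 11 * s ^ 2 +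
        10 * r * s ^ 2 + r ^ 2 * s ^ 2 = 0 := by
  refine ⟨by norm_num, ?_⟩
  rintro r ⟨t, ht⟩ ha
  set s : ℚ := (60 * r + t) / (r ^ 2 + 10 * r - 11) with hsdef
  have hs : s * (r ^ 2 + 10 * r - 11) = 60 * r + t := div_mul_cancel₀ _ ha
  refine ⟨s, ?_⟩
  have h2 : (r ^ 2 + 10 * r - 11) * (319 + 290 * r - 29 * r ^ 2 - 120 * r * s -
      11 * s ^ 2 + 10 * r * s ^ 2 + r ^ 2 * s ^ 2) = 0 := by
    linear_combination ht + (s * (r ^ 2 + 10 * r - 11) + 60 * r + t - 120 * r) * hs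
  rcases mul_eq_zero.mp h2 with h | h
  · exact absurd h ha
  · exact h
end

section
/- The quartic equation t^2 = 49 − 7r + 20r^2 + r^3 + r^4 has the rational solution (r,t) = (1,8), and whenever 49 − 7r + 20r^2 + r^3 + r^4 is a rational square and 21 + 2r + r^2 ≠ 0, the equation −35 + 10r − 15r^2 − 14s − 4rs + 2r^2s + 21s^2 + 2rs^2 + r^2s^2 = 0 has a rational solution s. -/
/-- The quartic `t² = 49 - 7r + 20r² + r³ + r⁴` has the rational solution `(r,t) = (1,8)`,
and whenever `49 - 7r + 20r² + r³ + r⁴` is a rational square and `21 + 2r + r² ≠ 0`, the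
equation `-35 + 10r - 15r² - 14s - 4rs + 2r²s + 21s² + 2rs² + r²s² = 0` has a rational
solution `s`. -/
theorem stmt15 :
    ((8 : ℚ) ^ 2 = 49 - 7 * 1 + 20 * 1 ^ 2 + 1 ^ 3 + 1 ^ 4) ∧
    ∀ r : ℚ, (∃ t : ℚ, t ^ 2 = 49 - 7 * r + 20 * r ^ 2 + r ^ 3 + r ^ 4) →
      21 + 2 * r + r ^ 2 ≠ 0 →
      ∃ s : ℚ, -35 + 10 * r - 15 * r ^ 2 - 14 * s - 4 * r * s + 2 * r ^ 2 * s +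
        21 * s ^ 2 + 2 * r * s ^ 2 + r ^ 2 * s ^ 2 = 0 := by
  refine ⟨by norm_num, ?_⟩
  rintro r ⟨t, ht⟩ ha
  refine ⟨(14 + 4 * r - 2 * r ^ 2 + 8 * t) / (2 * (21 + 2 * r + r ^ 2)), ?_⟩
  set s : ℚ := (14 + 4 * r - 2 * r ^ 2 + 8 * t) / (2 * (21 + 2 * r + r ^ 2)) with hs_def
  have hs : 2 * (21 + 2 * r + r ^ 2) * s = 14 + 4 * r - 2 * r ^ 2 + 8 * t := by
    rw [hs_def]; field_simp
  have h4 : (4 * (21 + 2 * r + r ^ 2)) * (-35 + 10 * r - 15 * r ^ 2 - 14 * s - 4 * r * s + 2 * r ^ 2 * s +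
      21 * s ^ 2 + 2 * r * s ^ 2 + r ^ 2 * s ^ 2) = 0 := by
    linear_combination (2 * (21 + 2 * r + r ^ 2) * s + (14 + 4 * r - 2 * r ^ 2 + 8 * t)
      + 2 * (2 * r ^ 2 - 4 * r - 14)) * hs + 64 * ht
  rcases mul_eq_zero.mp h4 with h | h
  · exact absurd (by linear_combination h / 4 : 21 + 2 * r + r ^ 2 = 0) ha
  · exact h
end

section
/- The elliptic curve y^2 = x^3 − 43x^2 + 280x over Q has positive Mordell–Weil rank; in particular it has infinitely many rational points. -/
/-- The elliptic curve `y² = x³ - 43x² + 280x` over `ℚ`. -/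
def curve43 : WeierstrassCurve.Affine ℚ :=
  { a₁ := 0, a₂ := -43, a₃ := 0, a₄ := 280, a₆ := 0 }

namespace Stmt16Aux

open WeierstrassCurve.Affine

lemma a1 : curve43.a₁ = 0 := rfl
lemma a2 : curve43.a₂ = -43 := rfl
lemma a3 : curve43.a₃ = 0 := rfl
lemma a4 : curve43.a₄ = 280 := rfl
lemma a6 : curve43.a₆ = 0 := rfl

lemma vne_zero {q : ℚ} {n : ℤ} (hn : n ≠ 0) (h : padicValRat 2 q = n) : q ≠ 0 := by
  rintro rfl
  rw [padicValRat.zero] at h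
  exact hn h.symm

lemma vadd {q r : ℚ} (hq : q ≠ 0) (hr : r ≠ 0)
    (h : padicValRat 2 q < padicValRat 2 r) :
    padicValRat 2 (q + r) = padicValRat 2 q := by
  refine padicValRat.add_eq_of_lt ?_ hq hr h
  intro h0
  have hr' : r = -q := by linarith [h0]
  rw [hr', padicValRat.neg] at h
  exact lt_irrefl _ h

lemma vadd' {q r : ℚ} (hq : q ≠ 0) (hr : r ≠ 0)
    (h : padicValRat 2 r < padicValRat 2 q) :
    padicValRat 2 (q + r) = padicValRat 2 r := by
  rw [add_comm]; exact vadd hr hq h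

lemma vnat {n : ℕ} (h : ¬ 2 ∣ n) : padicValRat 2 (n : ℚ) = 0 := by
  rw [padicValRat.of_nat, padicValNat.eq_zero_of_not_dvd h, Nat.cast_zero]

lemma v2 : padicValRat 2 (2 : ℚ) = 1 := by
  rw [show (2:ℚ) = ((2:ℕ):ℚ) by norm_num]
  exact padicValRat.self one_lt_two

lemma v3 : padicValRat 2 (3 : ℚ) = 0 := by
  rw [show (3:ℚ) = ((3:ℕ):ℚ) by norm_num]; exact vnat (by norm_num)

lemma v43 : padicValRat 2 (43 : ℚ) = 0 := by
  rw [show (43:ℚ) = ((43:ℕ):ℚ) by norm_num]; exact vnat (by norm_num)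

lemma v86 : padicValRat 2 (86 : ℚ) = 1 := by
  rw [show (86:ℚ) = 2 * 43 by norm_num,
    padicValRat.mul two_ne_zero (by norm_num), v2, v43]
  norm_num

lemma v280 : padicValRat 2 (280 : ℚ) = 3 := by
  rw [show (280:ℚ) = 2^3 * 35 by norm_num,
    padicValRat.mul (by norm_num) (by norm_num), padicValRat.pow 2, v2,
    show (35:ℚ) = ((35:ℕ):ℚ) by norm_num, vnat (by norm_num)]
  norm_num

/-- The invariant: `P` is an affine point whose coordinates have `2`-adic valuations
`-(2m+2)` and `-(3m+3)`. -/
def Good (m : ℕ) (P : curve43.Point) : Prop :=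
  ∃ (x y : ℚ) (h : curve43.Nonsingular x y), P = WeierstrassCurve.Affine.Point.some _ _ h ∧
    padicValRat 2 x = -(2 * (m : ℤ) + 2) ∧ padicValRat 2 y = -(3 * (m : ℤ) + 3)

lemma good_succ {m : ℕ} {P : curve43.Point} (hP : Good m P) : Good (m + 1) (P + P) := by
  obtain ⟨x, y, h, rfl, hx, hy⟩ := hP
  have hx0 : x ≠ 0 := vne_zero (by omega) hx
  have hy0 : y ≠ 0 := vne_zero (by omega) hy
  have hneg : curve43.negY x y = -y := by
    rw [WeierstrassCurve.Affine.negY, a1, a3]; ring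
  have hyne : y ≠ curve43.negY x y := by
    rw [hneg]; intro hE; apply hy0; linarith
  set L := curve43.slope x x y y with hLdef
  have hL : L = (3 * x ^ 2 + (-(86 * x) + 280)) / (2 * y) := by
    rw [hLdef, slope_of_Y_ne rfl hyne, hneg, a1, a2, a4]
    congr 1 <;> ring
  -- valuation of the slope numerator
  have h86x : padicValRat 2 (-(86 * x)) = -(2 * (m : ℤ) + 1) := by
    rw [padicValRat.neg, padicValRat.mul (by norm_num) hx0, v86, hx]; ring
  have hsub : padicValRat 2 (-(86 * x) + 280) = -(2 * (m : ℤ) + 1) := by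
    rw [vadd (vne_zero (by omega) h86x) (by norm_num) (by rw [h86x, v280]; omega)]
    exact h86x
  have h3x2 : padicValRat 2 (3 * x ^ 2) = -(4 * (m : ℤ) + 4) := by
    rw [padicValRat.mul (by norm_num) (pow_ne_zero 2 hx0), v3, padicValRat.pow x, hx]; ring
  have hN : padicValRat 2 (3 * x ^ 2 + (-(86 * x) + 280)) = -(4 * (m : ℤ) + 4) := by
    rw [vadd (mul_ne_zero (by norm_num) (pow_ne_zero 2 hx0)) (vne_zero (by omega) hsub)
      (by rw [h3x2, hsub]; omega)]
    exact h3x2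
  have hN0 : (3 * x ^ 2 + (-(86 * x) + 280)) ≠ 0 := vne_zero (by omega) hN
  have h2y : padicValRat 2 (2 * y) = -(3 * (m : ℤ) + 2) := by
    rw [padicValRat.mul two_ne_zero hy0, v2, hy]; ring
  have hvL : padicValRat 2 L = -((m : ℤ) + 2) := by
    rw [hL, padicValRat.div hN0 (mul_ne_zero two_ne_zero hy0), hN, h2y]; ring
  have hL0 : L ≠ 0 := vne_zero (by omega) hvL
  -- valuation of the new x-coordinate
  have hx'eq : curve43.addX x x L = L ^ 2 + (43 + -(2 * x)) := by
    simp only [WeierstrassCurve.Affine.addX, a1, a2]; ring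
  have h2x : padicValRat 2 (-(2 * x)) = -(2 * (m : ℤ) + 1) := by
    rw [padicValRat.neg, padicValRat.mul two_ne_zero hx0, v2, hx]; ring
  have h43x : padicValRat 2 (43 + -(2 * x)) = -(2 * (m : ℤ) + 1) := by
    rw [vadd' (by norm_num) (vne_zero (by omega) h2x) (by rw [h2x, v43]; omega)]
    exact h2x
  have hL2 : padicValRat 2 (L ^ 2) = -(2 * (m : ℤ) + 4) := by
    rw [padicValRat.pow L, hvL]; ring
  have hvx' : padicValRat 2 (curve43.addX x x L) = -(2 * (m : ℤ) + 4) := by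
    rw [hx'eq, vadd (pow_ne_zero 2 hL0) (vne_zero (by omega) h43x)
      (by rw [hL2, h43x]; omega)]
    exact hL2
  have hx'0 : curve43.addX x x L ≠ 0 := vne_zero (by omega) hvx'
  -- valuation of the new y-coordinate
  have hy'eq : curve43.addY x x y L = -(L * (curve43.addX x x L + -x) + y) := by
    simp only [WeierstrassCurve.Affine.addY, WeierstrassCurve.Affine.negY,
      WeierstrassCurve.Affine.negAddY, a1, a3]
    ring
  have hxsub : padicValRat 2 (curve43.addX x x L + -x) = -(2 * (m : ℤ) + 4) := by
    rw [vadd hx'0 (neg_ne_zero.mpr hx0) (by rw [hvx', padicValRat.neg, hx]; omega)]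
    exact hvx'
  have hLx : padicValRat 2 (L * (curve43.addX x x L + -x)) = -(3 * (m : ℤ) + 6) := by
    rw [padicValRat.mul hL0 (vne_zero (by omega) hxsub), hvL, hxsub]; ring
  have hvy' : padicValRat 2 (curve43.addY x x y L) = -(3 * (m : ℤ) + 6) := by
    rw [hy'eq, padicValRat.neg,
      vadd (vne_zero (by omega) hLx) hy0 (by rw [hLx, hy]; omega)]
    exact hLx
  rw [WeierstrassCurve.Affine.Point.add_self_of_Y_ne hyne]
  exact ⟨curve43.addX x x L, curve43.addY x x y L, nonsingular_add h h fun hc => hyne hc.2, rfl,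
    by rw [hvx']; push_cast; ring, by rw [hvy']; push_cast; ring⟩

lemma h0 : curve43.Nonsingular (5/4) (135/8) := by
  rw [WeierstrassCurve.Affine.nonsingular_iff, WeierstrassCurve.Affine.equation_iff,
    a1, a2, a3, a4, a6]
  norm_num

/-- The point `(5/4, 135/8)` on the curve. -/
noncomputable def P0 : curve43.Point := WeierstrassCurve.Affine.Point.some _ _ h0

lemma good_P0 : Good 0 P0 := by
  refine ⟨5/4, 135/8, h0, rfl, ?_, ?_⟩
  · rw [show (5/4 : ℚ) = (5:ℚ)/(4:ℚ) by norm_num,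
      padicValRat.div (by norm_num) (by norm_num),
      show (5:ℚ) = ((5:ℕ):ℚ) by norm_num, vnat (by norm_num),
      show (4:ℚ) = (2:ℚ)^2 by norm_num, padicValRat.pow 2, v2]
    norm_num
  · rw [show (135/8 : ℚ) = (135:ℚ)/(8:ℚ) by norm_num,
      padicValRat.div (by norm_num) (by norm_num),
      show (135:ℚ) = ((135:ℕ):ℚ) by norm_num, vnat (by norm_num),
      show (8:ℚ) = (2:ℚ)^3 by norm_num, padicValRat.pow 2, v2]
    norm_num

/-- Repeated doubling of `P0`. -/
noncomputable def g (k : ℕ) : curve43.Point := 2 ^ k • P0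

lemma good_g : ∀ k, Good k (g k) := by
  intro k
  induction k with
  | zero => simpa [g] using good_P0
  | succ n ih =>
      have : g (n + 1) = g n + g n := by
        rw [g, g, pow_succ, mul_comm, mul_nsmul, two_nsmul, nsmul_add]
      rw [this]
      exact good_succ ih

lemma good_unique {m m' : ℕ} {P : curve43.Point} (h1 : Good m P) (h2 : Good m' P) : m = m' := by
  obtain ⟨x, y, h, rfl, hx, hy⟩ := h1
  obtain ⟨x', y', h', heq, hx', hy'⟩ := h2
  injection heq with hxx hyy
  subst hxx
  rw [hx] at hx'
  omega

lemma g_inj : Function.Injective g := by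
  intro i j hij
  exact good_unique (good_g i) (hij ▸ good_g j)

lemma not_finOrder : ¬ IsOfFinAddOrder P0 := by
  intro hfin
  have hfinset : (AddSubmonoid.multiples P0 : Set curve43.Point).Finite :=
    hfin.finite_multiples
  have hsub : Set.range g ⊆ (AddSubmonoid.multiples P0 : Set curve43.Point) := by
    rintro _ ⟨k, rfl⟩
    exact ⟨2 ^ k, rfl⟩
  exact Set.infinite_range_of_injective g_inj (hfinset.subset hsub)

end Stmt16Aux

/-- The curve `y² = x³ - 43x² + 280x` has positive Mordell–Weil rank: it has a rational
point of infinite order; in particular it has infinitely many rational points. -/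
theorem stmt16 :
    (∃ P : curve43.Point, addOrderOf P = 0) ∧ Infinite curve43.Point := by
  exact ⟨⟨Stmt16Aux.P0, addOrderOf_eq_zero_iff.mpr Stmt16Aux.not_finOrder⟩,
    Infinite.of_injective Stmt16Aux.g Stmt16Aux.g_inj⟩
end
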